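/- Let f : A → B and g : B → A be morphisms of simplicial objects in a category with finite limits such that: (1) f_p : A_p → B_p is inverse to g_p for all p < n; (2) g_n is a section of f_n : A_n → B_n (i.e. f_n ∘ g_n = id); and (3) the canonical maps A → cosk_n A and B → cosk_n B are isomorphisms. Then f and g are simplicial homotopy inverses of each other; in particular f ∘ g is simplicially homotopic to id_B and g ∘ f is simplicially homotopic to id_A. -/

import Mathlib

open CategoryTheory CategoryTheory.Limits Opposite

namespace Stmt3

/-- A simplicial homotopy between two maps `f, g : X ⟶ Y` of simplicial objects:
a family of maps `h_τ : X_j ⟶ Y_j` indexed by order-preserving maps `τ : [j] → [1]`,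
compatible with the simplicial structure maps, restricting to `f` (resp. `g`) at the
constant map at `0` (resp. `1`). -/
structure SimplicialHomotopy {C : Type*} [Category C] {X Y : CategoryTheory.SimplicialObject C}
    (f g : X ⟶ Y) where
  h : ∀ (j : SimplexCategory), (j ⟶ SimplexCategory.mk 1) → (X.obj (op j) ⟶ Y.obj (op j))
  compat : ∀ {i j : SimplexCategory} (α : i ⟶ j) (τ : j ⟶ SimplexCategory.mk 1),
    h j τ ≫ Y.map α.op = X.map α.op ≫ h i (α ≫ τ)
  h_zero : ∀ j : SimplexCategory, h j (SimplexCategory.const j (SimplexCategory.mk 1) 0) =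
    f.app (op j)
  h_one : ∀ j : SimplexCategory, h j (SimplexCategory.const j (SimplexCategory.mk 1) 1) =
    g.app (op j)

open SimplexCategory CategoryTheory.Functor


open SimplexCategory CategoryTheory.Functor

noncomputable instance instFintypeHomSimplex (a b : SimplexCategory) : Fintype (a ⟶ b) :=
  Fintype.ofInjective (fun f => (f.toOrderHom : Fin (a.len + 1) → Fin (b.len + 1)))
    (fun f g h => SimplexCategory.Hom.ext _ _ (OrderHom.ext _ _ h))

noncomputable instance instFintypeTrunc (n : ℕ) : Fintype (SimplexCategory.Truncated n) :=
  Fintype.ofInjective (fun a => (⟨a.1.len, Nat.lt_succ_of_le a.2⟩ : Fin (n + 1)))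
    (fun a b h => by
      have h' : a.1.len = b.1.len := congrArg Fin.val h
      have h2 : a.1 = b.1 := by
        rw [← SimplexCategory.mk_len a.1, ← SimplexCategory.mk_len b.1, h']
      cases a; cases b
      dsimp at h2
      subst h2
      rfl)

noncomputable instance instFintypeTruncHom (n : ℕ) (a b : SimplexCategory.Truncated n) :
    Fintype (a ⟶ b) :=
  Fintype.ofEquiv _ InducedCategory.homEquiv.symm

noncomputable instance instFintypeOpObj {α : Type*} [Fintype α] : Fintype αᵒᵖ :=
  Fintype.ofEquiv α Opposite.equivToOpposite

noncomputable instance instFintypeOpHom {D : Type*} [Category D] (X Y : Dᵒᵖ)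
    [Fintype (Y.unop ⟶ X.unop)] : Fintype (X ⟶ Y) :=
  Fintype.ofEquiv _ (opEquiv X Y).symm

noncomputable instance instFinCatSA (n : ℕ) (Y : SimplexCategoryᵒᵖ) :
    FinCategory (StructuredArrow Y (SimplexCategory.Truncated.inclusion n).op) where
  fintypeObj := Fintype.ofInjective
    (fun o => (⟨o.right, o.hom⟩ : Σ d : (SimplexCategory.Truncated n)ᵒᵖ,
        (Y ⟶ (SimplexCategory.Truncated.inclusion n).op.obj d)))
    (fun o₁ o₂ h => by
      obtain ⟨e1, e2⟩ := Sigma.ext_iff.mp h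
      obtain ⟨⟨⟨⟩⟩, r₁, h₁⟩ := o₁
      obtain ⟨⟨⟨⟩⟩, r₂, h₂⟩ := o₂
      dsimp at e1 e2
      subst e1
      cases eq_of_heq e2
      rfl)
  fintypeHom j j' := Fintype.ofInjective (fun f => f.right)
    (fun f g h => by ext; exact h)

instance instHasPKE {C : Type*} [Category C] [HasFiniteLimits C] (n : ℕ)
    (F : (SimplexCategory.Truncated n)ᵒᵖ ⥤ C) :
    (SimplexCategory.Truncated.inclusion n).op.HasPointwiseRightKanExtension F :=
  fun _ => inferInstance


open SimplexCategory

lemma comp_const' {i j z : SimplexCategory} (β : i ⟶ j) (e : Fin (z.len + 1)) :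
    β ≫ SimplexCategory.const j z e = SimplexCategory.const i z e := rfl

lemma eq_const_one_of {i : SimplexCategory} (σ : i ⟶ SimplexCategory.mk 1)
    (h : σ.toOrderHom 0 ≠ 0) : σ = SimplexCategory.const i (SimplexCategory.mk 1) 1 := by
  have h0 : σ.toOrderHom 0 = 1 := by
    have hcase : ∀ x : Fin 2, x = 0 ∨ x = 1 := by decide
    rcases hcase (σ.toOrderHom 0) with hc | hc
    · exact absurd hc h
    · exact hc
  apply SimplexCategory.Hom.ext
  apply OrderHom.ext
  funext x
  have h1 : σ.toOrderHom 0 ≤ σ.toOrderHom x := σ.toOrderHom.monotone (Fin.zero_le x)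
  have h2 : σ.toOrderHom x ≤ 1 := by
    have := Fin.le_last (σ.toOrderHom x)
    simpa [SimplexCategory.len_mk, Fin.last] using this
  simp only [const_apply]
  rw [h0] at h1
  exact le_antisymm h2 h1

lemma const_zero_ne_one (i : SimplexCategory) :
    SimplexCategory.const i (SimplexCategory.mk 1) 0 ≠
      SimplexCategory.const i (SimplexCategory.mk 1) 1 := by
  intro h
  have h' := congrArg (fun f => f.toOrderHom 0) h
  simp only [const_apply] at h'
  exact absurd h' (by decide)

lemma not_surjective {i' i : SimplexCategory} (γ : i' ⟶ i) (σ : i ⟶ SimplexCategory.mk 1)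
    (hσ : σ ≠ SimplexCategory.const i (SimplexCategory.mk 1) 1)
    (hγσ : γ ≫ σ = SimplexCategory.const i' (SimplexCategory.mk 1) 1) :
    ¬ Function.Surjective γ.toOrderHom := by
  intro hs
  have h0 : σ.toOrderHom 0 = 0 := by
    by_contra h
    exact hσ (eq_const_one_of σ h)
  obtain ⟨x, hx⟩ := hs 0
  have h' : (γ ≫ σ).toOrderHom x = σ.toOrderHom (γ.toOrderHom x) := rfl
  rw [hγσ] at h'
  rw [hx, h0] at h'
  simp only [const_apply] at h'
  exact absurd h' (by decide)

lemma pos_len {i' i : SimplexCategory} (γ : i' ⟶ i) (σ : i ⟶ SimplexCategory.mk 1)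
    (hσ : σ ≠ SimplexCategory.const i (SimplexCategory.mk 1) 1)
    (hγσ : γ ≫ σ = SimplexCategory.const i' (SimplexCategory.mk 1) 1) :
    0 < i.len := by
  by_contra h
  have hi : i.len = 0 := by omega
  have h0 : σ.toOrderHom 0 = 0 := by
    by_contra hh
    exact hσ (eq_const_one_of σ hh)
  have hγ0 : γ.toOrderHom 0 = 0 := by
    apply Fin.ext
    have h3 := (γ.toOrderHom 0).isLt
    simp only [Fin.val_zero]
    omega
  have h' : (γ ≫ σ).toOrderHom 0 = σ.toOrderHom (γ.toOrderHom 0) := rfl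
  rw [hγσ, hγ0, h0] at h'
  simp only [const_apply] at h'
  exact absurd h' (by decide)


section Construction


variable {C : Type*} [Category C]

/-- The truncated homotopy. -/
noncomputable def kmap {B : CategoryTheory.SimplicialObject C} (u : B ⟶ B)
    (i : SimplexCategory) (σ : i ⟶ SimplexCategory.mk 1) : B.obj (op i) ⟶ B.obj (op i) :=
  letI := Classical.dec (σ = SimplexCategory.const i (SimplexCategory.mk 1) 1)
  if σ = SimplexCategory.const i (SimplexCategory.mk 1) 1 then 𝟙 _ else u.app (op i)

lemma kmap_one {B : CategoryTheory.SimplicialObject C} (u : B ⟶ B) (i : SimplexCategory) :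
    kmap u i (SimplexCategory.const i (SimplexCategory.mk 1) 1) = 𝟙 _ := by
  rw [kmap]
  exact if_pos rfl

lemma kmap_of_ne {B : CategoryTheory.SimplicialObject C} (u : B ⟶ B) (i : SimplexCategory)
    (σ : i ⟶ SimplexCategory.mk 1) (h : σ ≠ SimplexCategory.const i (SimplexCategory.mk 1) 1) :
    kmap u i σ = u.app (op i) := by
  rw [kmap]
  exact if_neg h

lemma kmap_compat (n : ℕ) {B : CategoryTheory.SimplicialObject C} (u : B ⟶ B)
    (hu : ∀ i : SimplexCategory, i.len < n → u.app (op i) = 𝟙 _)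
    {i i' : SimplexCategory} (hi : i.len ≤ n) (γ : i' ⟶ i) (σ : i ⟶ SimplexCategory.mk 1) :
    kmap u i σ ≫ B.map γ.op = B.map γ.op ≫ kmap u i' (γ ≫ σ) := by
  by_cases hσ : σ = SimplexCategory.const i (SimplexCategory.mk 1) 1
  · subst hσ
    rw [comp_const', kmap_one, kmap_one, Category.id_comp, Category.comp_id]
  · by_cases hγσ : γ ≫ σ = SimplexCategory.const i' (SimplexCategory.mk 1) 1
    · rw [kmap_of_ne u i σ hσ, hγσ, kmap_one, Category.comp_id]
      -- u.app (op i) ≫ B.map γ.op = B.map γ.op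
      have hns := not_surjective γ σ hσ hγσ
      have hpos := pos_len γ σ hσ hγσ
      obtain ⟨m, hm⟩ : ∃ m, i.len = m + 1 := ⟨i.len - 1, by omega⟩
      have hieq : i = SimplexCategory.mk (m + 1) := by
        rw [← SimplexCategory.mk_len i, hm]
      subst hieq
      obtain ⟨d, γ', hfac⟩ := SimplexCategory.eq_comp_δ_of_not_surjective γ hns
      subst hfac
      have hop : (γ' ≫ SimplexCategory.δ d).op = (SimplexCategory.δ d).op ≫ γ'.op := rfl
      rw [hop, B.map_comp, ← Category.assoc, ← u.naturality, Category.assoc]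
      have hm' : (SimplexCategory.mk m).len < n := by
        simp only [SimplexCategory.len_mk] at hi hm ⊢
        omega
      rw [hu _ hm']
      simp
    · rw [kmap_of_ne u i σ hσ, kmap_of_ne u i' _ hγσ]
      exact (u.naturality γ.op).symm

variable (n : ℕ)

/-- The cone used to define the homotopy in degree `j`. -/
noncomputable def homotopyCone {B : CategoryTheory.SimplicialObject C} (u : B ⟶ B)
    (hu : ∀ i : SimplexCategory, i.len < n → u.app (op i) = 𝟙 _)
    (j : SimplexCategory) (τ : j ⟶ SimplexCategory.mk 1) :
    Cone (StructuredArrow.proj (op j) (SimplexCategory.Truncated.inclusion n).op ⋙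
      ((SimplexCategory.Truncated.inclusion n).op ⋙ B)) where
  pt := B.obj (op j)
  π :=
    { app := fun g => B.map g.hom ≫ kmap u _ (g.hom.unop ≫ τ)
      naturality := fun g g' φ => by
        have hw : g.hom ≫ (SimplexCategory.Truncated.inclusion n).op.map φ.right = g'.hom :=
          StructuredArrow.w φ
        dsimp
        rw [Category.id_comp, ← hw]
        have hkc := kmap_compat n u hu g.right.unop.2
          ((SimplexCategory.Truncated.inclusion n).op.map φ.right).unop (g.hom.unop ≫ τ)
        simp only [Quiver.Hom.op_unop] at hkc
        simp only [unop_comp, Functor.map_comp, Category.assoc]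
        exact (Category.assoc _ _ _).trans ((congrArg (B.map g.hom ≫ ·) hkc.symm).trans (Category.assoc _ _ _).symm) }

lemma build_fac {B : CategoryTheory.SimplicialObject C} (u : B ⟶ B)
    (hu : ∀ i : SimplexCategory, i.len < n → u.app (op i) = 𝟙 _)
    (P : (CategoryTheory.SimplicialObject.Truncated.rightExtensionInclusion B
      n).IsPointwiseRightKanExtension)
    (j : SimplexCategory) (τ : j ⟶ SimplexCategory.mk 1) {i : SimplexCategory}
    (hi : i.len ≤ n) (β : i ⟶ j) :
    (P (op j)).lift (homotopyCone n u hu j τ) ≫ B.map β.op = B.map β.op ≫ kmap u i (β ≫ τ) := by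
  have := (P (op j)).fac (homotopyCone n u hu j τ)
    ((StructuredArrow.mk (Y := op (⟨i, hi⟩ : SimplexCategory.Truncated n)) (f := β.op) :
        StructuredArrow (op j) (SimplexCategory.Truncated.inclusion n).op))
  exact (congrArg (fun x => _ ≫ x) (Category.comp_id _)).symm.trans this

lemma build_ext {B : CategoryTheory.SimplicialObject C}
    (P : (CategoryTheory.SimplicialObject.Truncated.rightExtensionInclusion B
      n).IsPointwiseRightKanExtension)
    {j : SimplexCategory} {T : C} (w₁ w₂ : T ⟶ B.obj (op j))
    (hw : ∀ (i : SimplexCategory), i.len ≤ n → ∀ (β : i ⟶ j),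
      w₁ ≫ B.map β.op = w₂ ≫ B.map β.op) : w₁ = w₂ := by
  apply (P (op j)).hom_ext
  intro g
  have := hw ((SimplexCategory.Truncated.inclusion n).obj g.right.unop) g.right.unop.2 g.hom.unop
  exact (congrArg (w₁ ≫ ·) (Category.comp_id _)).trans (this.trans (congrArg (w₂ ≫ ·) (Category.comp_id _)).symm)

/-- The simplicial homotopy from `u` to the identity. -/
noncomputable def buildHomotopy {B : CategoryTheory.SimplicialObject C} (u : B ⟶ B)
    (hu : ∀ i : SimplexCategory, i.len < n → u.app (op i) = 𝟙 _)
    (P : (CategoryTheory.SimplicialObject.Truncated.rightExtensionInclusion B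
      n).IsPointwiseRightKanExtension) :
    SimplicialHomotopy u (𝟙 B) where
  h j τ := (P (op j)).lift (homotopyCone n u hu j τ)
  compat {i j} α τ := by
    apply build_ext n P
    intro i₀ hi₀ β
    have e1 : (P (op j)).lift (homotopyCone n u hu j τ) ≫ B.map (β ≫ α).op =
        B.map (β ≫ α).op ≫ kmap u i₀ ((β ≫ α) ≫ τ) := build_fac n u hu P j τ hi₀ (β ≫ α)
    have e2 : (P (op i)).lift (homotopyCone n u hu i (α ≫ τ)) ≫ B.map β.op =
        B.map β.op ≫ kmap u i₀ (β ≫ α ≫ τ) := build_fac n u hu P i (α ≫ τ) hi₀ β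
    simp only [op_comp, Functor.map_comp, Category.assoc] at e1 e2 ⊢
    exact (Category.assoc _ _ _).trans ((e1.trans (congrArg (B.map α.op ≫ ·) e2).symm).trans (Category.assoc _ _ _).symm)
  h_zero j := by
    apply build_ext n P
    intro i₀ hi₀ β
    erw [build_fac n u hu P j _ hi₀ β, comp_const',
      kmap_of_ne u i₀ _ (const_zero_ne_one i₀)]
    exact u.naturality β.op
  h_one j := by
    apply build_ext n P
    intro i₀ hi₀ β
    erw [build_fac n u hu P j _ hi₀ β, comp_const', kmap_one, Category.comp_id,
      NatTrans.id_app]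
    exact (Category.id_comp _).symm


end Construction

/-- If `f : A ⟶ B` and `g : B ⟶ A` are maps of `n`-coskeletal simplicial
objects which are mutually inverse in degrees `< n` and such that `g_n` is a section of
`f_n`, then `f` and `g` are simplicial homotopy inverses of each other. -/
theorem homotopyInverse_of_coskeletal {C : Type*} [Category C] [HasFiniteLimits C] (n : ℕ)
    [∀ (F : (SimplexCategory.Truncated n)ᵒᵖ ⥤ C),
      (SimplexCategory.Truncated.inclusion n).op.HasRightKanExtension F]
    {A B : CategoryTheory.SimplicialObject C} (f : A ⟶ B) (g : B ⟶ A)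
    (h1 : ∀ p : ℕ, p < n →
      f.app (op (SimplexCategory.mk p)) ≫ g.app (op (SimplexCategory.mk p)) = 𝟙 _ ∧
      g.app (op (SimplexCategory.mk p)) ≫ f.app (op (SimplexCategory.mk p)) = 𝟙 _)
    (h2 : g.app (op (SimplexCategory.mk n)) ≫ f.app (op (SimplexCategory.mk n)) = 𝟙 _)
    (hA : IsIso ((SimplicialObject.coskAdj n).unit.app A))
    (hB : IsIso ((SimplicialObject.coskAdj n).unit.app B)) :
    Nonempty (SimplicialHomotopy (g ≫ f) (𝟙 B)) ∧
      Nonempty (SimplicialHomotopy (f ≫ g) (𝟙 A)) := by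
  have hBc : B.IsCoskeletal n := by
    rw [SimplicialObject.isCoskeletal_iff_isIso]
    exact hB
  have hAc : A.IsCoskeletal n := by
    rw [SimplicialObject.isCoskeletal_iff_isIso]
    exact hA
  have PB : (CategoryTheory.SimplicialObject.Truncated.rightExtensionInclusion B
      n).IsPointwiseRightKanExtension :=
    Functor.isPointwiseRightKanExtensionOfIsRightKanExtension B
      (𝟙 ((SimplexCategory.Truncated.inclusion n).op ⋙ B))
  have PA : (CategoryTheory.SimplicialObject.Truncated.rightExtensionInclusion A
      n).IsPointwiseRightKanExtension :=
    Functor.isPointwiseRightKanExtensionOfIsRightKanExtension A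
      (𝟙 ((SimplexCategory.Truncated.inclusion n).op ⋙ A))
  have huB : ∀ i : SimplexCategory, i.len < n → (g ≫ f).app (op i) = 𝟙 _ := by
    intro i hlt
    obtain ⟨p, hp⟩ : ∃ p, i = SimplexCategory.mk p := ⟨i.len, (SimplexCategory.mk_len i).symm⟩
    have hlt' : p < n := by
      rw [hp] at hlt
      simpa using hlt
    have := (h1 p hlt').2
    rw [hp]
    simpa using this
  have huA : ∀ i : SimplexCategory, i.len < n → (f ≫ g).app (op i) = 𝟙 _ := by
    intro i hlt
    obtain ⟨p, hp⟩ : ∃ p, i = SimplexCategory.mk p := ⟨i.len, (SimplexCategory.mk_len i).symm⟩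
    have hlt' : p < n := by
      rw [hp] at hlt
      simpa using hlt
    have := (h1 p hlt').1
    rw [hp]
    simpa using this
  exact ⟨⟨buildHomotopy n (g ≫ f) huB PB⟩, ⟨buildHomotopy n (f ≫ g) huA PA⟩⟩

end Stmt3
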